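/- Let G_T be a G-system at t₀, J = {g_{1;t₀},…,g_{p;t₀}} ⊆ G_{t₀}, and G_t ∈ G_T. Then T_J(G_t) = T_{{g_{i_p;t₀}}} ∘ ⋯ ∘ T_{{g_{i₂;t₀}}} ∘ T_{{g_{i₁;t₀}}}(G_t) for any permutation (i₁,…,i_p) of (1,…,p); i.e., every co-Bongartz completion is a composition of elementary co-Bongartz completions, in any order. -/

import Mathlib

/-- A `G`-system at `t₀` (Definition 5.1.1): a collection of ℤ-bases of ℤⁿ, indexed by `T`,
satisfying the Mutation Condition, the Co-Bongartz Completion Condition and the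
Uniqueness Condition. -/
structure GSystem (n : ℕ) (T : Type) (t₀ : T) where
  g : T → Fin n → (Fin n → ℤ)
  indep : ∀ t, LinearIndependent ℤ (g t)
  span : ∀ t, Submodule.span ℤ (Set.range (g t)) = ⊤
  mutation : ∀ (t : T) (k : Fin n), ∃ t₁ : T,
    Set.range (g t) ∩ Set.range (g t₁) = Set.range (g t) \ {g t k}
  coBongartz : ∀ (t : T) (J : Set (Fin n → ℤ)), J ⊆ Set.range (g t₀) →
    ∃ t' : T, J ⊆ Set.range (g t') ∧
      ∀ (k : Fin n) (r : Fin n → ℤ), g t k = ∑ i, r i • g t' i →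
        ∀ i, g t' i ∉ J → 0 ≤ r i
  uniqueness : ∀ (u v : T) (I I' : Finset (Fin n)) (r r' : Fin n → ℤ),
    (∀ i ∈ I, 0 < r i) → (∀ j ∈ I', 0 < r' j) →
    (∑ i ∈ I, r i • g u i) = (∑ j ∈ I', r' j • g v j) →
    ∃ σ : Fin n → Fin n, Set.BijOn σ ↑I' ↑I ∧
      ∀ j ∈ I', r' j = r (σ j) ∧ g v j = g u (σ j)

/-- `G_{t'}` is a co-Bongartz completion of `J` with respect to `G_t`
(conditions (a) and (b) of Proposition-Definition 5.1.4). -/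
def GSystem.IsCoB {n : ℕ} {T : Type} {t₀ : T} (S : GSystem n T t₀)
    (J : Set (Fin n → ℤ)) (t t' : T) : Prop :=
  J ⊆ Set.range (S.g t') ∧
  ∀ (k : Fin n) (r : Fin n → ℤ), S.g t k = ∑ i, r i • S.g t' i →
    ∀ i, S.g t' i ∉ J → 0 ≤ r i

/-- `G_{t'}` is the mutation of `G_t` at `g_{k;t}`, i.e.
`G_t ∩ G_{t'} = G_t \ {g_{k;t}}` (Proposition-Definition 5.1.3). -/
def GSystem.IsMutationAt {n : ℕ} {T : Type} {t₀ : T} (S : GSystem n T t₀)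
    (t t' : T) (k : Fin n) : Prop :=
  Set.range (S.g t) ∩ Set.range (S.g t') = Set.range (S.g t) \ {S.g t k}

namespace GSystem

variable {n : ℕ} {T : Type} {t₀ : T}

/-- The ℤ-basis of `ℤⁿ` given by `G_t`. -/
noncomputable def basis (S : GSystem n T t₀) (t : T) : Module.Basis (Fin n) ℤ (Fin n → ℤ) :=
  Module.Basis.mk (S.indep t) (S.span t).ge

lemma basis_apply (S : GSystem n T t₀) (t : T) (i : Fin n) : S.basis t i = S.g t i := by
  simp [basis]

lemma repr_eq (S : GSystem n T t₀) (t : T) (r : Fin n → ℤ) {x : Fin n → ℤ}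
    (hx : x = ∑ i, r i • S.g t i) (i : Fin n) : (S.basis t).repr x i = r i := by
  subst hx
  simp only [← S.basis_apply t]
  simp only [map_sum, map_smul, Finsupp.coe_finset_sum, Finset.sum_apply, Finsupp.smul_apply,
    Module.Basis.repr_self, Finsupp.single_apply, smul_eq_mul, mul_ite, mul_one, mul_zero]
  simp

lemma sum_repr (S : GSystem n T t₀) (t : T) (x : Fin n → ℤ) :
    x = ∑ i, (S.basis t).repr x i • S.g t i := by
  conv_lhs => rw [← (S.basis t).sum_repr x]
  simp [basis_apply]

lemma repr_g_nonneg (S : GSystem n T t₀) (t : T) {x : Fin n → ℤ}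
    (hx : x ∈ Set.range (S.g t)) (i : Fin n) : 0 ≤ (S.basis t).repr x i := by
  obtain ⟨i', rfl⟩ := hx
  rw [← S.basis_apply t, Module.Basis.repr_self, Finsupp.single_apply]
  split <;> norm_num

lemma repr_sum_nonneg (S : GSystem n T t₀) (u : T) (c : Fin n → ℤ) (v : Fin n → (Fin n → ℤ))
    (hc : ∀ j, 0 ≤ c j) (hv : ∀ j, c j ≠ 0 → v j ∈ Set.range (S.g u)) (i : Fin n) :
    0 ≤ (S.basis u).repr (∑ j, c j • v j) i := by
  rw [map_sum, Finsupp.coe_finset_sum, Finset.sum_apply]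
  refine Finset.sum_nonneg fun j _ => ?_
  rw [map_smul, Finsupp.smul_apply, smul_eq_mul]
  rcases eq_or_ne (c j) 0 with h | h
  · simp [h]
  · exact mul_nonneg (hc j) (S.repr_g_nonneg u (hv j h) i)

/-- Key consequence of the Uniqueness Condition: if `w` has nonnegative coordinates in both
`G_u` and `G_v`, then every basis vector of `G_u` appearing in `w` belongs to `G_v`. -/
lemma keyM (S : GSystem n T t₀) (u v : T) (w : Fin n → ℤ)
    (hu : ∀ i, 0 ≤ (S.basis u).repr w i) (hv : ∀ j, 0 ≤ (S.basis v).repr w j)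
    {i : Fin n} (hi : (S.basis u).repr w i ≠ 0) :
    S.g u i ∈ Set.range (S.g v) := by
  classical
  have hsum : ∀ s : T,
      ∑ j ∈ Finset.univ.filter (fun j => (S.basis s).repr w j ≠ 0),
        (S.basis s).repr w j • S.g s j = w := by
    intro s
    rw [Finset.sum_filter_of_ne (fun j _ h => by
      intro h0; rw [h0, zero_smul] at h; exact h rfl)]
    exact (S.sum_repr s w).symm
  obtain ⟨τ, hbij, hmatch⟩ := S.uniqueness u v _ _ _ _
    (fun j hj => lt_of_le_of_ne (hu j) (Ne.symm (by simpa using (Finset.mem_filter.mp hj).2)))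
    (fun j hj => lt_of_le_of_ne (hv j) (Ne.symm (by simpa using (Finset.mem_filter.mp hj).2)))
    ((hsum u).trans (hsum v).symm)
  have hiI : i ∈ Finset.univ.filter (fun j => (S.basis u).repr w j ≠ 0) := by
    simp [hi]
  obtain ⟨j, hj, hji⟩ := hbij.surjOn hiI
  exact ⟨j, ((hmatch j hj).2.trans (by rw [hji]))⟩

/-- The "defect" of `y` with respect to the basis `G_s`: adding it to `y` makes all
`G_s`-coordinates nonnegative, and it is a nonnegative combination of basis vectors of
`G_s` at which `y` has negative coordinates. -/
noncomputable def defect (S : GSystem n T t₀) (s : T) (y : Fin n → ℤ) : Fin n → ℤ :=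
  ∑ j, ((S.basis s).repr y j ⊔ 0 - (S.basis s).repr y j) • S.g s j

lemma defect_coeff_nonneg (a : ℤ) : 0 ≤ a ⊔ 0 - a := by
  simp [sub_nonneg]

lemma defect_coeff_ne (a : ℤ) (h : a ⊔ 0 - a ≠ 0) : a < 0 := by
  by_contra h'
  push_neg at h'
  rw [sup_of_le_left h'] at h
  simp at h

lemma repr_defect_eq (S : GSystem n T t₀) (s : T) (y : Fin n → ℤ) (j : Fin n) :
    (S.basis s).repr (S.defect s y) j = (S.basis s).repr y j ⊔ 0 - (S.basis s).repr y j :=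
  S.repr_eq s _ rfl j

lemma repr_add_defect (S : GSystem n T t₀) (s : T) (y : Fin n → ℤ) (j : Fin n) :
    (S.basis s).repr (y + S.defect s y) j = (S.basis s).repr y j ⊔ 0 := by
  rw [map_add, Finsupp.add_apply, repr_defect_eq]
  ring

lemma repr_defect_nonneg (S : GSystem n T t₀) (s u : T) (y : Fin n → ℤ)
    (h : ∀ j, (S.basis s).repr y j < 0 → S.g s j ∈ Set.range (S.g u)) (i : Fin n) :
    0 ≤ (S.basis u).repr (S.defect s y) i :=
  S.repr_sum_nonneg u _ _ (fun j => defect_coeff_nonneg _)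
    (fun j hj => h j (defect_coeff_ne _ hj)) i


lemma exists_ne_coord (S : GSystem n T t₀) (t t1 : T) (i : Fin n) :
    ∃ k, (S.basis t1).repr (S.g t k) i ≠ 0 := by
  by_contra h
  push_neg at h
  have hker : Set.range (S.g t) ⊆ (LinearMap.ker ((S.basis t1).coord i) : Set (Fin n → ℤ)) := by
    rintro _ ⟨k, rfl⟩
    simpa [Module.Basis.coord_apply] using h k
  have htop : (⊤ : Submodule ℤ (Fin n → ℤ)) ≤ LinearMap.ker ((S.basis t1).coord i) := by
    rw [← S.span t]; exact Submodule.span_le.mpr hker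
  have h1 : (S.basis t1).coord i (S.basis t1 i) = 0 := htop Submodule.mem_top
  rw [Module.Basis.coord_apply, Module.Basis.repr_self] at h1
  simp at h1

/-- Uniqueness of co-Bongartz completions: one inclusion of ranges. -/
lemma range_subset_of_isCoB {S : GSystem n T t₀} {J : Set (Fin n → ℤ)} {t t1 t2 : T}
    (h1 : S.IsCoB J t t1) (h2 : S.IsCoB J t t2) :
    Set.range (S.g t1) ⊆ Set.range (S.g t2) := by
  rintro _ ⟨i, rfl⟩
  by_cases hJ : S.g t1 i ∈ J
  · exact h2.1 hJ
  obtain ⟨k, hk⟩ := S.exists_ne_coord t t1 i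
  set y := S.g t k with hy
  have hneg1 : ∀ j, (S.basis t1).repr y j < 0 → S.g t1 j ∈ J := by
    intro j hj
    by_contra hnj
    exact absurd (h1.2 k (fun i' => (S.basis t1).repr y i') (S.sum_repr t1 y) j hnj)
      (not_le.mpr hj)
  have hneg2 : ∀ j, (S.basis t2).repr y j < 0 → S.g t2 j ∈ J := by
    intro j hj
    by_contra hnj
    exact absurd (h2.2 k (fun i' => (S.basis t2).repr y i') (S.sum_repr t2 y) j hnj)
      (not_le.mpr hj)
  set w := y + S.defect t1 y + S.defect t2 y with hw
  have hu : ∀ i', 0 ≤ (S.basis t1).repr w i' := by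
    intro i'
    rw [hw, map_add, Finsupp.add_apply, S.repr_add_defect]
    exact add_nonneg le_sup_right
      (S.repr_defect_nonneg t2 t1 y (fun j hj => h1.1 (hneg2 j hj)) i')
  have hv : ∀ j, 0 ≤ (S.basis t2).repr w j := by
    intro j
    have hw' : w = (y + S.defect t2 y) + S.defect t1 y := by rw [hw]; abel
    rw [hw', map_add, Finsupp.add_apply, S.repr_add_defect]
    exact add_nonneg le_sup_right
      (S.repr_defect_nonneg t1 t2 y (fun j hj => h2.1 (hneg1 j hj)) j)
  have hi : (S.basis t1).repr w i ≠ 0 := by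
    have h0 : 0 ≤ (S.basis t1).repr y i :=
      h1.2 k (fun i' => (S.basis t1).repr y i') (S.sum_repr t1 y) i hJ
    have hpos : 0 < (S.basis t1).repr y i := lt_of_le_of_ne h0 (Ne.symm hk)
    have hge : (S.basis t1).repr y i ⊔ 0 ≤ (S.basis t1).repr w i := by
      rw [hw, map_add, Finsupp.add_apply, S.repr_add_defect]
      exact le_add_of_nonneg_right
        (S.repr_defect_nonneg t2 t1 y (fun j hj => h1.1 (hneg2 j hj)) i)
    have : 0 < (S.basis t1).repr w i :=
      lt_of_lt_of_le (lt_sup_iff.mpr (Or.inl hpos)) hge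
    exact ne_of_gt this
  exact S.keyM t1 t2 w hu hv hi

/-- A vector of `G_{t₀}` which lies in `G_{t1}` still lies in any co-Bongartz completion
of a subset `K` of `G_{t₀}` with respect to `G_{t1}`. -/
lemma mem_range_of_isCoB {S : GSystem n T t₀} {K : Set (Fin n → ℤ)} {t1 t2 : T}
    (hK : K ⊆ Set.range (S.g t₀)) {x : Fin n → ℤ} (hx0 : x ∈ Set.range (S.g t₀))
    (hx1 : x ∈ Set.range (S.g t1)) (h2 : S.IsCoB K t1 t2) :
    x ∈ Set.range (S.g t2) := by
  obtain ⟨i₀, hi₀⟩ := hx0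
  obtain ⟨i₁, hi₁⟩ := hx1
  set w := x + S.defect t2 x with hw
  have hneg2 : ∀ j, (S.basis t2).repr x j < 0 → S.g t2 j ∈ K := by
    intro j hj
    by_contra hnj
    have hsum : S.g t1 i₁ = ∑ i, (S.basis t2).repr x i • S.g t2 i := by
      rw [hi₁]; exact S.sum_repr t2 x
    exact absurd (h2.2 i₁ (fun i' => (S.basis t2).repr x i') hsum j hnj) (not_le.mpr hj)
  have hv : ∀ j, 0 ≤ (S.basis t2).repr w j := by
    intro j
    rw [hw, S.repr_add_defect]
    exact le_sup_right
  have hu : ∀ i, 0 ≤ (S.basis t₀).repr w i := by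
    intro i
    rw [hw, map_add, Finsupp.add_apply]
    exact add_nonneg (S.repr_g_nonneg t₀ ⟨i₀, hi₀⟩ i)
      (S.repr_defect_nonneg t2 t₀ x (fun j hj => hK (hneg2 j hj)) i)
  have hx0' : (S.basis t₀).repr x i₀ = 1 := by
    rw [← hi₀, ← S.basis_apply t₀, Module.Basis.repr_self, Finsupp.single_apply, if_pos rfl]
  have hi : (S.basis t₀).repr w i₀ ≠ 0 := by
    have : 0 < (S.basis t₀).repr w i₀ := by
      rw [hw, map_add, Finsupp.add_apply, hx0']
      have := S.repr_defect_nonneg t2 t₀ x (fun j hj => hK (hneg2 j hj)) i₀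
      omega
    exact ne_of_gt this
  have := S.keyM t₀ t2 w hu hv hi
  rwa [hi₀] at this

/-- Composition of co-Bongartz completions. -/
lemma isCoB_union {S : GSystem n T t₀} {J K : Set (Fin n → ℤ)} {t t1 t2 : T}
    (hJ : J ⊆ Set.range (S.g t₀)) (hK : K ⊆ Set.range (S.g t₀))
    (h1 : S.IsCoB J t t1) (h2 : S.IsCoB K t1 t2) : S.IsCoB (J ∪ K) t t2 := by
  have hJ2 : J ⊆ Set.range (S.g t2) :=
    fun x hx => mem_range_of_isCoB hK (hJ hx) (h1.1 hx) h2
  refine ⟨Set.union_subset hJ2 h2.1, ?_⟩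
  intro k r hsum j hj
  rw [← S.repr_eq t2 r hsum j]
  have hexp : (S.basis t2).repr (S.g t k) j
      = ∑ i', (S.basis t1).repr (S.g t k) i' * (S.basis t2).repr (S.g t1 i') j := by
    conv_lhs => rw [S.sum_repr t1 (S.g t k)]
    rw [map_sum, Finsupp.coe_finset_sum, Finset.sum_apply]
    refine Finset.sum_congr rfl fun i' _ => ?_
    rw [map_smul, Finsupp.smul_apply, smul_eq_mul]
  rw [hexp]
  refine Finset.sum_nonneg fun i' _ => ?_
  by_cases hiJ : S.g t1 i' ∈ J
  · obtain ⟨j'', hj''⟩ := hJ2 hiJ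
    have hjj : j'' ≠ j := by
      rintro rfl
      exact hj (Or.inl (hj'' ▸ hiJ))
    have hz : (S.basis t2).repr (S.g t1 i') j = 0 := by
      rw [← hj'', ← S.basis_apply t2, Module.Basis.repr_self, Finsupp.single_apply, if_neg hjj]
    rw [hz, mul_zero]
  · have ha : 0 ≤ (S.basis t1).repr (S.g t k) i' :=
      h1.2 k (fun i'' => (S.basis t1).repr (S.g t k) i'') (S.sum_repr t1 _) i' hiJ
    have hb : 0 ≤ (S.basis t2).repr (S.g t1 i') j :=
      h2.2 i' (fun j' => (S.basis t2).repr (S.g t1 i') j') (S.sum_repr t2 _) j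
        (fun hK' => hj (Or.inr hK'))
    exact mul_nonneg ha hb

lemma isCoB_refl (S : GSystem n T t₀) (t : T) (J : Set (Fin n → ℤ))
    (hJ : J ⊆ Set.range (S.g t)) : S.IsCoB J t t := by
  refine ⟨hJ, fun k r hsum i _ => ?_⟩
  rw [← S.repr_eq t r hsum i]
  exact S.repr_g_nonneg t ⟨k, rfl⟩ i

end GSystem

/-- Corollary 5.1.10: any co-Bongartz completion `T_J(G_t)` along
`J = {g_{1;t₀}, …, g_{p;t₀}} ⊆ G_{t₀}` is the composition of the elementary
co-Bongartz completions at the single vectors of `J`, in any order. -/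
theorem stmt6 {n : ℕ} {T : Type} {t₀ : T} (S : GSystem n T t₀) (t : T)
    (p : ℕ) (e : Fin p → (Fin n → ℤ)) (he : Function.Injective e)
    (hesub : Set.range e ⊆ Set.range (S.g t₀))
    (σ : Equiv.Perm (Fin p))
    (u : Fin (p + 1) → T) (hu0 : u 0 = t)
    (hstep : ∀ i : Fin p, S.IsCoB {e (σ i)} (u i.castSucc) (u i.succ))
    (t' : T) (ht' : S.IsCoB (Set.range e) t t') :
    Set.range (S.g (u (Fin.last p))) = Set.range (S.g t') := by
  have hkey : ∀ m : ℕ, ∀ hm : m ≤ p,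
      S.IsCoB ((fun j => e (σ j)) '' {j : Fin p | (j : ℕ) < m}) t
        (u ⟨m, Nat.lt_succ_of_le hm⟩) := by
    intro m
    induction m with
    | zero =>
      intro hm
      have hset : {j : Fin p | (j : ℕ) < 0} = ∅ := by
        ext j; simp
      rw [hset, Set.image_empty]
      have h0 : (⟨0, Nat.lt_succ_of_le hm⟩ : Fin (p + 1)) = 0 := by
        ext; simp
      rw [h0, hu0]
      exact S.isCoB_refl t ∅ (Set.empty_subset _)
    | succ m ih =>
      intro hm
      have hm' : m < p := hm
      have h1 := ih (Nat.le_of_lt hm')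
      have h2 := hstep ⟨m, hm'⟩
      have hJsub : (fun j => e (σ j)) '' {j : Fin p | (j : ℕ) < m} ⊆ Set.range (S.g t₀) := by
        rintro _ ⟨j, _, rfl⟩
        exact hesub ⟨σ j, rfl⟩
      have hKsub : ({e (σ ⟨m, hm'⟩)} : Set (Fin n → ℤ)) ⊆ Set.range (S.g t₀) := by
        rintro _ rfl
        exact hesub ⟨σ ⟨m, hm'⟩, rfl⟩
      have h2' : S.IsCoB {e (σ ⟨m, hm'⟩)} (u ⟨m, Nat.lt_succ_of_le (Nat.le_of_lt hm')⟩)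
          (u ⟨m + 1, Nat.lt_succ_of_le hm⟩) := by
        have hc : (⟨m, hm'⟩ : Fin p).castSucc = ⟨m, Nat.lt_succ_of_le (Nat.le_of_lt hm')⟩ := by
          ext; simp
        have hs : (⟨m, hm'⟩ : Fin p).succ = ⟨m + 1, Nat.lt_succ_of_le hm⟩ := by
          ext; simp
        rwa [hc, hs] at h2
      have h3 := GSystem.isCoB_union hJsub hKsub h1 h2'
      have hset : {j : Fin p | (j : ℕ) < m + 1} = insert ⟨m, hm'⟩ {j : Fin p | (j : ℕ) < m} := by
        ext j
        simp only [Set.mem_setOf_eq, Set.mem_insert_iff, Fin.ext_iff]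
        omega
      rw [hset, Set.image_insert_eq, ← Set.union_singleton]
      exact h3
  have hfull := hkey p le_rfl
  have hset : {j : Fin p | (j : ℕ) < p} = Set.univ := by
    ext j; simp [j.isLt]
  rw [hset, Set.image_univ] at hfull
  have hrange : Set.range (fun j => e (σ j)) = Set.range e := by
    have hcomp : (fun j => e (σ j)) = e ∘ σ := rfl
    rw [hcomp, Set.range_comp, Equiv.range_eq_univ, Set.image_univ]
  rw [hrange] at hfull
  have hlast : (⟨p, Nat.lt_succ_of_le le_rfl⟩ : Fin (p + 1)) = Fin.last p := rfl
  rw [hlast] at hfull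
  exact Set.Subset.antisymm (GSystem.range_subset_of_isCoB hfull ht')
    (GSystem.range_subset_of_isCoB ht' hfull)
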